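/- Let ε ∈ (0,1) and let A : [0,∞) → ℝ be twice continuously differentiable with A(0) = ε, A'(0) = 0, and A''(y) + (y²/16) A(y) = (y/4) A(y)³ − (3/16) A(y)⁵ for all y ≥ 0. Then |A(y)| < 2ε for every y ∈ [0, 1/3]. -/

import Mathlib

set_option maxHeartbeats 1000000 in
/-- For `ε ∈ (0,1)`, any C² solution of the amplitude equation
`A'' + (y²/16) A = (y/4) A³ − (3/16) A⁵` on `[0,∞)` with `A(0) = ε`, `A'(0) = 0`
satisfies `|A(y)| < 2ε` for every `y ∈ [0, 1/3]`. -/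
theorem stmt_12 (ε : ℝ) (hε0 : 0 < ε) (hε1 : ε < 1)
    (A : ℝ → ℝ) (hA : ContDiff ℝ 2 A) (h0 : A 0 = ε) (h'0 : deriv A 0 = 0)
    (hODE : ∀ y : ℝ, 0 ≤ y →
      deriv (deriv A) y + y ^ 2 / 16 * A y = y / 4 * A y ^ 3 - 3 / 16 * A y ^ 5) :
    ∀ y : ℝ, 0 ≤ y → y ≤ 1 / 3 → |A y| < 2 * ε := by
  have hc : Continuous A := hA.continuous
  have hA1 : ContDiff ℝ 1 (deriv A) :=
    ((contDiff_succ_iff_deriv (n := 1)).mp (by exact_mod_cast hA)).2.2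
  have hA'c : Continuous (deriv A) := hA1.continuous
  have hA''c : Continuous (deriv (deriv A)) :=
    ((contDiff_succ_iff_deriv (n := 0)).mp (by exact_mod_cast hA1)).2.2.continuous
  have hAdiff : ∀ x : ℝ, DifferentiableAt ℝ A x :=
    fun x => (hA.differentiable (by norm_num)).differentiableAt
  have hA'diff : ∀ x : ℝ, DifferentiableAt ℝ (deriv A) x :=
    fun x => (hA1.differentiable (by norm_num)).differentiableAt
  -- the key integral estimate
  have key : ∀ y : ℝ, 0 ≤ y → y ≤ 1 / 3 →
      (∀ t, 0 ≤ t → t ≤ y → |A t| ≤ 3 * ε / 2) → |A y - ε| ≤ 2 * ε * y ^ 2 := by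
    intro y hy0 hy3 hb
    -- bound on the second derivative
    have hdd : ∀ t, 0 ≤ t → t ≤ y → |deriv (deriv A) t| ≤ 2 * ε := by
      intro t ht0 hty
      have hode := hODE t ht0
      have ha : |A t| ≤ 3 * ε / 2 := hb t ht0 hty
      have ha0 : (0:ℝ) ≤ |A t| := abs_nonneg _
      have hty' : t ≤ 1 / 3 := le_trans hty hy3
      have hddval : deriv (deriv A) t = t / 4 * A t ^ 3 - 3 / 16 * A t ^ 5 - t ^ 2 / 16 * A t := by
        linarith
      rw [hddval]
      have htri : |t / 4 * A t ^ 3 - 3 / 16 * A t ^ 5 - t ^ 2 / 16 * A t| ≤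
          t / 4 * |A t| ^ 3 + 3 / 16 * |A t| ^ 5 + t ^ 2 / 16 * |A t| := by
        calc |t / 4 * A t ^ 3 - 3 / 16 * A t ^ 5 - t ^ 2 / 16 * A t|
            ≤ |t / 4 * A t ^ 3 - 3 / 16 * A t ^ 5| + |t ^ 2 / 16 * A t| := abs_sub _ _
          _ ≤ |t / 4 * A t ^ 3| + |3 / 16 * A t ^ 5| + |t ^ 2 / 16 * A t| := by
              linarith [abs_sub (t / 4 * A t ^ 3) (3 / 16 * A t ^ 5)]
          _ = t / 4 * |A t| ^ 3 + 3 / 16 * |A t| ^ 5 + t ^ 2 / 16 * |A t| := by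
              rw [abs_mul, abs_mul, abs_mul, abs_pow, abs_pow,
                abs_of_nonneg (by linarith : (0:ℝ) ≤ t / 4),
                abs_of_nonneg (by norm_num : (0:ℝ) ≤ (3:ℝ) / 16),
                abs_of_nonneg (by positivity : (0:ℝ) ≤ t ^ 2 / 16)]
      refine le_trans htri ?_
      set b := |A t| with hbdef
      have hb3 : b ^ 3 ≤ (3 * ε / 2) ^ 3 := pow_le_pow_left₀ ha0 ha 3
      have hb5 : b ^ 5 ≤ (3 * ε / 2) ^ 5 := pow_le_pow_left₀ ha0 ha 5
      have h2 : ε ^ 2 ≤ 1 := by nlinarith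
      have h4 : ε ^ 4 ≤ 1 := by nlinarith
      have he3 : ε ^ 3 ≤ ε := by nlinarith
      have he5 : ε ^ 5 ≤ ε := by nlinarith
      nlinarith [pow_nonneg ha0 3, pow_nonneg ha0 5, sq_nonneg t, mul_nonneg ht0 ha0,
        mul_nonneg (mul_nonneg ht0 ht0) ha0]
    -- bound on the first derivative
    have hd : ∀ s, 0 ≤ s → s ≤ y → |deriv A s| ≤ 2 * ε * y := by
      intro s hs0 hsy
      have hint : ∫ t in (0:ℝ)..s, deriv (deriv A) t = deriv A s - deriv A 0 :=
        intervalIntegral.integral_deriv_eq_sub (fun x _ => hA'diff x)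
          (hA''c.intervalIntegrable 0 s)
      rw [h'0, sub_zero] at hint
      rw [← hint]
      have hn : ‖∫ t in (0:ℝ)..s, deriv (deriv A) t‖ ≤ 2 * ε * |s - 0| := by
        apply intervalIntegral.norm_integral_le_of_norm_le_const
        intro x hx
        rw [Set.uIoc_of_le hs0] at hx
        rw [Real.norm_eq_abs]
        exact hdd x (le_of_lt hx.1) (le_trans hx.2 hsy)
      rw [Real.norm_eq_abs, sub_zero, abs_of_nonneg hs0] at hn
      nlinarith
    have hint : ∫ s in (0:ℝ)..y, deriv A s = A y - A 0 :=
      intervalIntegral.integral_deriv_eq_sub (fun x _ => hAdiff x)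
        (hA'c.intervalIntegrable 0 y)
    rw [h0] at hint
    rw [← hint]
    have hn : ‖∫ s in (0:ℝ)..y, deriv A s‖ ≤ 2 * ε * y * |y - 0| := by
      apply intervalIntegral.norm_integral_le_of_norm_le_const
      intro x hx
      rw [Set.uIoc_of_le hy0] at hx
      rw [Real.norm_eq_abs]
      exact hd x (le_of_lt hx.1) hx.2
    rw [Real.norm_eq_abs, sub_zero, abs_of_nonneg hy0] at hn
    nlinarith
  -- the bootstrap set
  set S : Set ℝ := {y | y ∈ Set.Icc (0:ℝ) (1/3) ∧ ∀ t, 0 ≤ t → t ≤ y → |A t| ≤ 3 * ε / 2}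
    with hS
  have h0S : (0:ℝ) ∈ S := by
    refine ⟨⟨le_refl 0, by norm_num⟩, fun t ht0 ht1 => ?_⟩
    have : t = 0 := le_antisymm ht1 ht0
    rw [this, h0, abs_of_pos hε0]; linarith
  have hne : S.Nonempty := ⟨0, h0S⟩
  have hbdd : BddAbove S := ⟨1/3, fun y hy => hy.1.2⟩
  set T := sSup S with hT
  have hT0 : 0 ≤ T := le_csSup hbdd h0S
  have hT3 : T ≤ 1/3 := csSup_le hne (fun y hy => hy.1.2)
  -- all points strictly below T satisfy the bound
  have hlt : ∀ t, 0 ≤ t → t < T → |A t| ≤ 3 * ε / 2 := by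
    intro t ht0 htT
    obtain ⟨z, hzS, htz⟩ := exists_lt_of_lt_csSup hne htT
    exact hzS.2 t ht0 (le_of_lt htz)
  -- T itself satisfies the bound (by continuity)
  have hTS : ∀ t, 0 ≤ t → t ≤ T → |A t| ≤ 3 * ε / 2 := by
    intro t ht0 htT
    rcases lt_or_eq_of_le htT with h | h
    · exact hlt t ht0 h
    · rw [h]
      rcases eq_or_lt_of_le hT0 with h' | h'
      · rw [← h', h0, abs_of_pos hε0]; linarith
      · have hclosed : IsClosed {x : ℝ | |A x| ≤ 3 * ε / 2} :=
          isClosed_le (continuous_abs.comp hc) continuous_const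
        have hsub : Set.Ico (0:ℝ) T ⊆ {x : ℝ | |A x| ≤ 3 * ε / 2} :=
          fun x hx => hlt x hx.1 hx.2
        have hsub2 : Set.Icc (0:ℝ) T ⊆ {x : ℝ | |A x| ≤ 3 * ε / 2} := by
          rw [← closure_Ico (ne_of_lt h')]
          exact hclosed.closure_subset_iff.mpr hsub
        exact hsub2 ⟨hT0, le_refl T⟩
  -- improved bound on [0, T]
  have himp : ∀ t, 0 ≤ t → t ≤ T → |A t| ≤ 11 * ε / 9 := by
    intro t ht0 htT
    have h1 : |A t - ε| ≤ 2 * ε * t ^ 2 :=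
      key t ht0 (le_trans htT hT3) (fun s hs0 hst => hTS s hs0 (le_trans hst htT))
    have h2 : t ^ 2 ≤ 1 / 9 := by nlinarith [le_trans htT hT3]
    have h3 : |A t| ≤ |A t - ε| + |ε| := by
      calc |A t| = |(A t - ε) + ε| := by ring_nf
        _ ≤ |A t - ε| + |ε| := abs_add_le _ _
    rw [abs_of_pos hε0] at h3
    nlinarith
  -- T must equal 1/3
  have hTeq : T = 1/3 := by
    by_contra hne'
    have hTlt : T < 1/3 := lt_of_le_of_ne hT3 hne'
    have hU : IsOpen {x : ℝ | |A x| < 3 * ε / 2} :=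
      isOpen_lt (continuous_abs.comp hc) continuous_const
    have hTU : T ∈ {x : ℝ | |A x| < 3 * ε / 2} := by
      have := himp T hT0 (le_refl T)
      simp only [Set.mem_setOf_eq]
      linarith
    obtain ⟨δ, hδ0, hball⟩ := Metric.isOpen_iff.mp hU T hTU
    set z := min (T + δ / 2) (1/3) with hz
    have hzT : T < z := lt_min (by linarith) hTlt
    have hzS : z ∈ S := by
      refine ⟨⟨le_trans hT0 (le_of_lt hzT), min_le_right _ _⟩, fun t ht0 htz => ?_⟩
      rcases le_or_gt t T with h | h
      · exact hTS t ht0 h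
      · have h1 : t ≤ T + δ / 2 := le_trans htz (min_le_left _ _)
        have h2 : dist t T < δ := by
          rw [Real.dist_eq, abs_of_pos (by linarith : (0:ℝ) < t - T)]
          linarith
        exact le_of_lt (hball h2)
    have : z ≤ T := le_csSup hbdd hzS
    linarith
  -- conclude
  intro y hy0 hy3
  have hb : ∀ t, 0 ≤ t → t ≤ y → |A t| ≤ 3 * ε / 2 :=
    fun t ht0 hty => hTS t ht0 (by rw [hTeq]; exact le_trans hty hy3)
  have h1 : |A y - ε| ≤ 2 * ε * y ^ 2 := key y hy0 hy3 hb
  have h2 : y ^ 2 ≤ 1 / 9 := by nlinarith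
  have h3 : |A y| ≤ |A y - ε| + |ε| := by
    calc |A y| = |(A y - ε) + ε| := by ring_nf
      _ ≤ |A y - ε| + |ε| := abs_add_le _ _
  rw [abs_of_pos hε0] at h3
  nlinarith
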